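/- arXiv:2307.07284 — 2 statements merged into one kernel-verified Lean document; each statement's English description precedes it below -/
import Mathlib

section
/- For every real α ≥ 0 there exists a deterministic delayed-decision algorithm with reservations for online Vertex Cover whose cost with reservation cost α is at most min{1 + 2α, 2}·τ(G) on every instance (n, G). -/
open SimpleGraph

/-- `S` is a vertex cover of `G`: it contains at least one endpoint of every edge. -/
def IsVC {n : ℕ} (G : SimpleGraph (Fin n)) (S : Finset (Fin n)) : Prop :=
  ∀ ⦃x y : Fin n⦄, G.Adj x y → x ∈ S ∨ y ∈ S

/-- `vcNum G` is the minimum size of a vertex cover of `G`. -/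
noncomputable def vcNum {n : ℕ} (G : SimpleGraph (Fin n)) : ℕ :=
  sInf {k : ℕ | ∃ S : Finset (Fin n), IsVC G S ∧ S.card = k}

/-- A deterministic delayed-decision algorithm with reservations for online
Vertex Cover: besides the irrevocably selected set `S`, the algorithm may reserve
a set `R` of vertices. -/
structure DelayedVCAlgorithmRes where
  /-- the set of irrevocably selected vertices after seeing the first `i` vertices -/
  S : ∀ n : ℕ, SimpleGraph (Fin n) → ℕ → Finset (Fin n)
  /-- the set of reserved vertices after seeing the first `i` vertices -/
  R : ∀ n : ℕ, SimpleGraph (Fin n) → ℕ → Finset (Fin n)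
  memS_lt : ∀ (n : ℕ) (G : SimpleGraph (Fin n)) (i : ℕ) (v : Fin n),
    v ∈ S n G i → (v : ℕ) < i
  memR_lt : ∀ (n : ℕ) (G : SimpleGraph (Fin n)) (i : ℕ) (v : Fin n),
    v ∈ R n G i → (v : ℕ) < i
  /-- determinism/online condition: on instances agreeing on their `i`-th prefix, the
  selected and reserved sets agree -/
  online : ∀ (n m : ℕ) (G : SimpleGraph (Fin n)) (G' : SimpleGraph (Fin m)) (i : ℕ)
      (hn : i ≤ n) (hm : i ≤ m),
      (∀ x y : Fin i, G.Adj (Fin.castLE hn x) (Fin.castLE hn y) ↔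
        G'.Adj (Fin.castLE hm x) (Fin.castLE hm y)) →
      (S n G i).image Fin.val = (S m G' i).image Fin.val ∧
      (R n G i).image Fin.val = (R m G' i).image Fin.val
  irrevocableS : ∀ (n : ℕ) (G : SimpleGraph (Fin n)) (i : ℕ), i < n →
    S n G i ⊆ S n G (i + 1)
  irrevocableR : ∀ (n : ℕ) (G : SimpleGraph (Fin n)) (i : ℕ), i < n →
    R n G i ⊆ R n G (i + 1)
  /-- the subgraph induced on the presented vertices outside `S ∪ R` has no edges -/
  valid : ∀ (n : ℕ) (G : SimpleGraph (Fin n)) (i : ℕ), i ≤ n →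
    ∀ x y : Fin n, (x : ℕ) < i → (y : ℕ) < i →
      x ∉ S n G i ∪ R n G i → y ∉ S n G i ∪ R n G i → ¬ G.Adj x y

/-- The cost of an algorithm with reservations on the instance `(n, G)` with
reservation cost `α`: the irrevocably selected vertices, plus the minimum number of
further vertices needed to complete them to a vertex cover, plus `α` per reserved
vertex. -/
noncomputable def resCost (A : DelayedVCAlgorithmRes) (α : ℝ) (n : ℕ)
    (G : SimpleGraph (Fin n)) : ℝ :=
  ((A.S n G n).card : ℝ) +
    ((sInf {k : ℕ | ∃ T : Finset (Fin n), IsVC G (A.S n G n ∪ T) ∧ T.card = k} : ℕ) : ℝ) +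
    α * ((A.R n G n).card : ℝ)

open scoped Classical

def adjN (n : ℕ) (G : SimpleGraph (Fin n)) (a b : ℕ) : Prop :=
  ∃ (ha : a < n) (hb : b < n), G.Adj ⟨a, ha⟩ ⟨b, hb⟩

lemma adjN_symm {n G a b} (h : adjN n G a b) : adjN n G b a := by
  obtain ⟨ha, hb, h⟩ := h; exact ⟨hb, ha, h.symm⟩

lemma adjN_ne {n G a b} (h : adjN n G a b) : a ≠ b := by
  obtain ⟨ha, hb, h⟩ := h
  intro he; subst he
  exact G.irrefl h

noncomputable def gM (n : ℕ) (G : SimpleGraph (Fin n)) : ℕ → Finset ℕ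
  | 0 => ∅
  | i + 1 =>
      gM n G i ∪
        (if ∃ k, k < i ∧ adjN n G k i ∧ k ∉ gM n G i then
          {i, sInf {k | k < i ∧ adjN n G k i ∧ k ∉ gM n G i}} else ∅)

lemma gM_lt {n G} : ∀ i, ∀ k ∈ gM n G i, k < i := by
  intro i
  induction i with
  | zero => simp [gM]
  | succ i ih =>
    intro k hk
    simp only [gM, Finset.mem_union] at hk
    rcases hk with hk | hk
    · exact lt_trans (ih k hk) (Nat.lt_succ_self i)
    · split at hk
      · rename_i h
        simp only [Finset.mem_insert, Finset.mem_singleton] at hk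
        rcases hk with rfl | rfl
        · exact Nat.lt_succ_self k
        · have := Nat.sInf_mem h
          exact lt_trans this.1 (Nat.lt_succ_self i)
      · simp at hk

lemma gM_succ {n G} {i : ℕ} : gM n G i ⊆ gM n G (i + 1) := by
  simp only [gM]; exact Finset.subset_union_left

lemma gM_mono {n G} {i j : ℕ} (h : i ≤ j) : gM n G i ⊆ gM n G j := by
  induction j, h using Nat.le_induction with
  | base => exact subset_rfl
  | succ j hij ih => exact ih.trans gM_succ

lemma gM_valid {n G i} {a b : ℕ} (ha : a < i) (hb : b < i)
    (hna : a ∉ gM n G i) (hnb : b ∉ gM n G i) : ¬ adjN n G a b := by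
  intro hadj
  wlog hab : a < b generalizing a b
  · exact this hb ha hnb hna (adjN_symm hadj)
      (lt_of_le_of_ne (not_lt.mp hab) (adjN_ne hadj).symm)
  have hE : ∃ k, k < b ∧ adjN n G k b ∧ k ∉ gM n G b :=
    ⟨a, hab, hadj, fun h => hna (gM_mono hb.le h)⟩
  have : b ∈ gM n G (b + 1) := by
    simp only [gM, if_pos hE]
    exact Finset.mem_union_right _ (Finset.mem_insert_self _ _)
  exact hnb (gM_mono hb this)

lemma gM_card_le {n : ℕ} {G : SimpleGraph (Fin n)} {S : Finset (Fin n)} (hS : IsVC G S) :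
    ∀ i, (gM n G i).card ≤ 2 * (S.filter (fun v : Fin n => (v : ℕ) ∈ gM n G i)).card := by
  intro i
  induction i with
  | zero => simp [gM]
  | succ i ih =>
    by_cases hE : ∃ k, k < i ∧ adjN n G k i ∧ k ∉ gM n G i
    · set u := sInf {k | k < i ∧ adjN n G k i ∧ k ∉ gM n G i} with hu_def
      have hu : u < i ∧ adjN n G u i ∧ u ∉ gM n G i := Nat.sInf_mem hE
      have hstep : gM n G (i + 1) = gM n G i ∪ {i, u} := by
        simp only [gM, if_pos hE]
        rfl
      have hiu : i ≠ u := fun h => absurd (h ▸ hu.1) (lt_irrefl i)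
      have hi_notin : i ∉ gM n G i := fun h => absurd (gM_lt i i h) (lt_irrefl i)
      have hdisj : Disjoint (gM n G i) ({i, u} : Finset ℕ) := by
        simp only [Finset.disjoint_insert_right, Finset.disjoint_singleton_right]
        exact ⟨hi_notin, hu.2.2⟩
      have hcard : (gM n G (i + 1)).card = (gM n G i).card + 2 := by
        rw [hstep, Finset.card_union_of_disjoint hdisj, Finset.card_pair hiu]
      obtain ⟨hun, hin, hadj⟩ := hu.2.1
      have hcov := hS hadj
      have hnew : ∃ w : Fin n, w ∈ S ∧ (w : ℕ) ∈ gM n G (i + 1) ∧ (w : ℕ) ∉ gM n G i := by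
        rcases hcov with hw | hw
        · exact ⟨⟨u, hun⟩, hw, by rw [hstep]; simp, hu.2.2⟩
        · exact ⟨⟨i, hin⟩, hw, by rw [hstep]; simp, hi_notin⟩
      obtain ⟨w, hwS, hw1, hw0⟩ := hnew
      have hsub : S.filter (fun v : Fin n => (v : ℕ) ∈ gM n G i) ⊂
          S.filter (fun v : Fin n => (v : ℕ) ∈ gM n G (i + 1)) := by
        have hsubset : S.filter (fun v : Fin n => (v : ℕ) ∈ gM n G i) ⊆
            S.filter (fun v : Fin n => (v : ℕ) ∈ gM n G (i + 1)) := by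
          intro x hx
          rw [Finset.mem_filter] at hx ⊢
          exact ⟨hx.1, gM_mono (Nat.le_succ i) hx.2⟩
        exact (Finset.ssubset_iff_of_subset hsubset).mpr
          ⟨w, Finset.mem_filter.mpr ⟨hwS, hw1⟩, fun h => hw0 (Finset.mem_filter.mp h).2⟩
      have := Finset.card_lt_card hsub
      omega
    · have hstep : gM n G (i + 1) = gM n G i := by
        simp only [gM, if_neg hE, Finset.union_empty]
      rw [hstep]; exact ih

lemma gM_online {n m : ℕ} {G : SimpleGraph (Fin n)} {G' : SimpleGraph (Fin m)} {i : ℕ}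
    (hn : i ≤ n) (hm : i ≤ m)
    (hagree : ∀ x y : Fin i, G.Adj (Fin.castLE hn x) (Fin.castLE hn y) ↔
      G'.Adj (Fin.castLE hm x) (Fin.castLE hm y)) :
    ∀ j ≤ i, gM n G j = gM m G' j := by
  have hadj : ∀ a b, a < i → b < i → (adjN n G a b ↔ adjN m G' a b) := by
    intro a b ha hb
    have h := hagree ⟨a, ha⟩ ⟨b, hb⟩
    constructor
    · rintro ⟨_, _, hx⟩
      exact ⟨lt_of_lt_of_le ha hm, lt_of_lt_of_le hb hm, h.mp hx⟩
    · rintro ⟨_, _, hx⟩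
      exact ⟨lt_of_lt_of_le ha hn, lt_of_lt_of_le hb hn, h.mpr hx⟩
  intro j hj
  induction j with
  | zero => rfl
  | succ j ih =>
    have hji : j < i := hj
    have ihj := ih hji.le
    simp only [gM, ihj]
    have hP : ∀ k, (k < j ∧ adjN n G k j ∧ k ∉ gM m G' j) ↔
        (k < j ∧ adjN m G' k j ∧ k ∉ gM m G' j) := by
      intro k
      constructor
      · rintro ⟨h1, h2, h3⟩
        exact ⟨h1, (hadj k j (lt_trans h1 hji) hji).mp h2, h3⟩
      · rintro ⟨h1, h2, h3⟩
        exact ⟨h1, (hadj k j (lt_trans h1 hji) hji).mpr h2, h3⟩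
    simp only [hP]

noncomputable def toFin (n : ℕ) (M : Finset ℕ) : Finset (Fin n) :=
  Finset.univ.filter (fun v => (v : ℕ) ∈ M)

lemma mem_toFin {n M} {v : Fin n} : v ∈ toFin n M ↔ (v : ℕ) ∈ M := by
  simp [toFin]

lemma toFin_image {n : ℕ} {M : Finset ℕ} (h : ∀ k ∈ M, k < n) :
    (toFin n M).image Fin.val = M := by
  ext k
  simp only [Finset.mem_image]
  constructor
  · rintro ⟨v, hv, rfl⟩; exact mem_toFin.mp hv
  · intro hk; exact ⟨⟨k, h k hk⟩, mem_toFin.mpr hk, rfl⟩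

lemma toFin_card {n : ℕ} {M : Finset ℕ} (h : ∀ k ∈ M, k < n) :
    (toFin n M).card = M.card :=
  calc (toFin n M).card = ((toFin n M).image Fin.val).card :=
        (Finset.card_image_of_injective _ Fin.val_injective).symm
    _ = M.card := by rw [toFin_image h]

noncomputable def matchAlg (useRes : Bool) : DelayedVCAlgorithmRes where
  S n G i := if useRes then ∅ else toFin n (gM n G i)
  R n G i := if useRes then toFin n (gM n G i) else ∅
  memS_lt n G i v hv := by
    cases useRes with
    | true => simp at hv
    | false =>
      simp only [if_neg Bool.false_ne_true, Bool.false_eq_true, if_false] at hv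
      exact gM_lt i _ (mem_toFin.mp hv)
  memR_lt n G i v hv := by
    cases useRes with
    | false => simp at hv
    | true =>
      simp only [if_pos rfl] at hv
      exact gM_lt i _ (mem_toFin.mp hv)
  online n m G G' i hn hm hagree := by
    have hgm := gM_online hn hm hagree i le_rfl
    have h1 : (toFin n (gM n G i)).image Fin.val = (toFin m (gM m G' i)).image Fin.val := by
      rw [toFin_image (fun k hk => lt_of_lt_of_le (gM_lt i k hk) hn),
        toFin_image (fun k hk => lt_of_lt_of_le (gM_lt i k hk) hm), hgm]
    cases useRes <;> simp [h1]
  irrevocableS n G i _ := by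
    cases useRes with
    | true => simp
    | false =>
      simp only [Bool.false_eq_true, if_false]
      intro v hv
      exact mem_toFin.mpr (gM_succ (mem_toFin.mp hv))
  irrevocableR n G i _ := by
    cases useRes with
    | false => simp
    | true =>
      simp only [if_pos rfl]
      intro v hv
      exact mem_toFin.mpr (gM_succ (mem_toFin.mp hv))
  valid n G i hi x y hx hy hxn hyn hadj := by
    have hx' : (x : ℕ) ∉ gM n G i := by
      intro h
      apply hxn
      cases useRes <;> simp [mem_toFin, h]
    have hy' : (y : ℕ) ∉ gM n G i := by
      intro h
      apply hyn
      cases useRes <;> simp [mem_toFin, h]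
    exact gM_valid hx hy hx' hy' ⟨x.2, y.2, by simpa using hadj⟩


/-- There is a `min {1 + 2α, 2}`-competitive deterministic delayed-decision algorithm
with reservations for online Vertex Cover. -/
theorem vc_reservation_upper_bound (α : ℝ) (hα : 0 ≤ α) :
    ∃ A : DelayedVCAlgorithmRes, ∀ (n : ℕ) (G : SimpleGraph (Fin n)),
      resCost A α n G ≤ min (1 + 2 * α) 2 * (vcNum G : ℝ) := by
  by_cases hhalf : α ≤ 1 / 2
  case pos =>
    refine ⟨matchAlg true, fun n G => ?_⟩
    -- optimal cover
    have hne : {k : ℕ | ∃ S : Finset (Fin n), IsVC G S ∧ S.card = k}.Nonempty :=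
      ⟨Finset.univ.card, Finset.univ, fun x y _ => Or.inl (Finset.mem_univ x), rfl⟩
    obtain ⟨S0, hS0, hS0card⟩ := Nat.sInf_mem hne
    have hRcard : ((matchAlg true).R n G n).card ≤ 2 * vcNum G := by
      have h1 : ((matchAlg true).R n G n).card = (gM n G n).card := by
        show (toFin n (gM n G n)).card = _
        exact toFin_card (fun k hk => gM_lt n k hk)
      have h2 := gM_card_le hS0 n
      have h3 : (S0.filter (fun v : Fin n => (v : ℕ) ∈ gM n G n)).card ≤ S0.card :=
        Finset.card_filter_le _ _
      rw [h1]
      calc (gM n G n).card ≤ 2 * (S0.filter (fun v : Fin n => (v : ℕ) ∈ gM n G n)).card := h2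
        _ ≤ 2 * S0.card := by omega
        _ = 2 * vcNum G := by rw [hS0card]; rfl
    have hS : (matchAlg true).S n G n = ∅ := rfl
    have hsInf : sInf {k : ℕ | ∃ T : Finset (Fin n),
        IsVC G ((matchAlg true).S n G n ∪ T) ∧ T.card = k} = vcNum G := by
      rw [hS]
      congr 1
      ext k
      simp [Finset.empty_union, vcNum]
    rw [resCost, hsInf, hS]
    simp only [Finset.card_empty, Nat.cast_zero, zero_add]
    have hmin : min (1 + 2 * α) 2 = 1 + 2 * α := by
      rw [min_eq_left]; linarith
    rw [hmin]
    have hRcast : ((((matchAlg true).R n G n).card : ℕ) : ℝ) ≤ 2 * (vcNum G : ℝ) := by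
      exact_mod_cast hRcard
    nlinarith [Nat.cast_nonneg (α := ℝ) (vcNum G)]
  case neg =>
    refine ⟨matchAlg false, fun n G => ?_⟩
    push_neg at hhalf
    have hne : {k : ℕ | ∃ S : Finset (Fin n), IsVC G S ∧ S.card = k}.Nonempty :=
      ⟨Finset.univ.card, Finset.univ, fun x y _ => Or.inl (Finset.mem_univ x), rfl⟩
    obtain ⟨S0, hS0, hS0card⟩ := Nat.sInf_mem hne
    have hR : (matchAlg false).R n G n = ∅ := rfl
    have hSdef : (matchAlg false).S n G n = toFin n (gM n G n) := rfl
    have hScard : ((matchAlg false).S n G n).card ≤ 2 * vcNum G := by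
      rw [hSdef, toFin_card (fun k hk => gM_lt n k hk)]
      have h2 := gM_card_le hS0 n
      have h3 : (S0.filter (fun v : Fin n => (v : ℕ) ∈ gM n G n)).card ≤ S0.card :=
        Finset.card_filter_le _ _
      calc (gM n G n).card ≤ 2 * (S0.filter (fun v : Fin n => (v : ℕ) ∈ gM n G n)).card := h2
        _ ≤ 2 * S0.card := by omega
        _ = 2 * vcNum G := by rw [hS0card]; rfl
    -- S itself is a vertex cover
    have hVC : IsVC G ((matchAlg false).S n G n ∪ ∅) := by
      rw [Finset.union_empty, hSdef]
      intro x y hadj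
      by_contra hcon
      push_neg at hcon
      have hx : (x : ℕ) ∉ gM n G n := fun h => hcon.1 (mem_toFin.mpr h)
      have hy : (y : ℕ) ∉ gM n G n := fun h => hcon.2 (mem_toFin.mpr h)
      exact gM_valid x.2 y.2 hx hy ⟨x.2, y.2, by simpa using hadj⟩ 
    have hsInf : sInf {k : ℕ | ∃ T : Finset (Fin n),
        IsVC G ((matchAlg false).S n G n ∪ T) ∧ T.card = k} = 0 := by
      have h0 : 0 ∈ {k : ℕ | ∃ T : Finset (Fin n),
          IsVC G ((matchAlg false).S n G n ∪ T) ∧ T.card = k} := ⟨∅, hVC, rfl⟩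
      exact Nat.eq_zero_of_le_zero (Nat.sInf_le h0)
    rw [resCost, hR, hsInf]
    simp only [Finset.card_empty, Nat.cast_zero, add_zero, mul_zero]
    have hmin : min (1 + 2 * α) 2 = 2 := by
      rw [min_eq_right]; linarith
    rw [hmin]
    exact_mod_cast hScard
end

section
/- For every real α > 1/2, every real ε > 0 and every deterministic delayed-decision algorithm with reservations for online Vertex Cover, there exists an instance (n, G) with τ(G) ≥ 1 whose cost with reservation cost α exceeds (2 − ε)·τ(G). In other words, for α > 1/2 no such algorithm is better than 2-competitive. -/
open SimpleGraph

namespace VCLB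

open Finset

/-- The tree graph on `Fin n` determined by a parent function. -/
def Tg (p : ℕ → ℕ) (n : ℕ) : SimpleGraph (Fin n) where
  Adj i j := (i : ℕ) ≠ (j : ℕ) ∧ p (max (i : ℕ) (j : ℕ)) = min (i : ℕ) (j : ℕ)
  symm := by
    refine ⟨fun i j h => ?_⟩
    exact ⟨fun hc => h.1 hc.symm, by rw [max_comm, min_comm]; exact h.2⟩
  loopless := ⟨fun i h => h.1 rfl⟩

lemma Tg_adj {p : ℕ → ℕ} {n : ℕ} {i j : Fin n} :
    (Tg p n).Adj i j ↔ (i : ℕ) ≠ (j : ℕ) ∧ p (max (i : ℕ) (j : ℕ)) = min (i : ℕ) (j : ℕ) :=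
  Iff.rfl

lemma Tg_congr {p q : ℕ → ℕ} {n : ℕ} (h : ∀ j < n, p j = q j) : Tg p n = Tg q n := by
  ext i j
  rw [Tg_adj, Tg_adj, h _ (max_lt i.isLt j.isLt)]

/-- `S∪R` after the whole graph `Tg p m` has been presented, as a set of naturals. -/
noncomputable def covOf (A : DelayedVCAlgorithmRes) (p : ℕ → ℕ) (m : ℕ) : Finset ℕ :=
  (A.S m (Tg p m) m).image Fin.val ∪ (A.R m (Tg p m) m).image Fin.val

/-- History of pending vertices: `pendH A n m` is the pending vertex after stage `m`,
as computed with horizon `n ≥ m`. -/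
noncomputable def pendH (A : DelayedVCAlgorithmRes) : ℕ → ℕ → ℕ
  | 0 => fun _ => 0
  | n + 1 => fun m =>
      if m ≤ n then pendH A n m
      else if pendH A n n ∈ covOf A (fun j => pendH A n (j - 1)) (n + 2) then n + 1
        else pendH A n n

/-- the pending (uncovered) vertex after vertices `0,…,n` have been presented. -/
noncomputable def pend (A : DelayedVCAlgorithmRes) (n : ℕ) : ℕ := pendH A n n

/-- parent of vertex `j ≥ 1` in the adversary's tree: the pending vertex just before `j` arrives. -/
noncomputable def par (A : DelayedVCAlgorithmRes) (j : ℕ) : ℕ := pend A (j - 1)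

lemma pendH_stable (A : DelayedVCAlgorithmRes) :
    ∀ n m, m ≤ n → pendH A n m = pend A m := by
  intro n
  induction n with
  | zero => intro m hm; interval_cases m; rfl
  | succ n ih =>
    intro m hm
    rcases Nat.lt_or_ge m (n+1) with h | h
    · have hm' : m ≤ n := Nat.lt_succ_iff.mp h
      show (if m ≤ n then pendH A n m else _) = pend A m
      rw [if_pos hm', ih m hm']
    · have : m = n + 1 := le_antisymm hm h
      subst this; rfl

lemma pend_zero (A : DelayedVCAlgorithmRes) : pend A 0 = 0 := rfl

lemma pend_succ (A : DelayedVCAlgorithmRes) (n : ℕ) :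
    pend A (n+1) = if pend A n ∈ covOf A (par A) (n + 2) then n + 1 else pend A n := by
  have hcong : covOf A (fun j => pendH A n (j - 1)) (n + 2) = covOf A (par A) (n + 2) := by
    unfold covOf
    have : Tg (fun j => pendH A n (j - 1)) (n + 2) = Tg (par A) (n + 2) := by
      apply Tg_congr
      intro j hj
      have : j - 1 ≤ n := by omega
      rw [pendH_stable A n (j-1) this]; rfl
    rw [this]
  show (if n + 1 ≤ n then _ else _) = _
  rw [if_neg (by omega), hcong]
  have h1 : pendH A n n = pend A n := rfl
  rw [h1]

lemma pend_le (A : DelayedVCAlgorithmRes) (n : ℕ) : pend A n ≤ n := by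
  induction n with
  | zero => exact le_rfl
  | succ n ih =>
    rw [pend_succ]
    split <;> omega

lemma par_lt (A : DelayedVCAlgorithmRes) (j : ℕ) (hj : 1 ≤ j) : par A j < j := by
  have := pend_le A (j - 1)
  unfold par; omega

/-- depth of a vertex in the adversary's (unstarred) tree. -/
noncomputable def depthR (A : DelayedVCAlgorithmRes) : ℕ → ℕ
  | 0 => 0
  | j + 1 => depthR A (par A (j+1)) + 1
  decreasing_by exact par_lt A _ (Nat.succ_le_succ (Nat.zero_le _))

lemma depthR_succ (A : DelayedVCAlgorithmRes) (j : ℕ) :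
    depthR A (j+1) = depthR A (par A (j+1)) + 1 := by
  rw [depthR]

lemma depthR_succ_parent (A : DelayedVCAlgorithmRes) (j : ℕ) (hj : 1 ≤ j) :
    depthR A j = depthR A (par A j) + 1 := by
  obtain ⟨k, rfl⟩ : ∃ k, j = k + 1 := ⟨j - 1, by omega⟩
  exact depthR_succ A k


section Transport

variable (A : DelayedVCAlgorithmRes) (p : ℕ → ℕ)

lemma Tg_prefix_iso {n m : ℕ} (i : ℕ) (hn : i ≤ n) (hm : i ≤ m) :
    ∀ x y : Fin i, (Tg p n).Adj (Fin.castLE hn x) (Fin.castLE hn y) ↔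
      (Tg p m).Adj (Fin.castLE hm x) (Fin.castLE hm y) := by
  intro x y
  rw [Tg_adj, Tg_adj]
  simp only [Fin.coe_castLE]

/-- the algorithm's selected set at time `i` does not depend on the horizon. -/
lemma SImg_horizon {n m : ℕ} (i : ℕ) (hn : i ≤ n) (hm : i ≤ m) :
    (A.S n (Tg p n) i).image Fin.val = (A.S m (Tg p m) i).image Fin.val := by
  exact (A.online n m _ _ i hn hm (Tg_prefix_iso p i hn hm)).1

lemma RImg_horizon {n m : ℕ} (i : ℕ) (hn : i ≤ n) (hm : i ≤ m) :
    (A.R n (Tg p n) i).image Fin.val = (A.R m (Tg p m) i).image Fin.val := by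
  exact (A.online n m _ _ i hn hm (Tg_prefix_iso p i hn hm)).2

lemma SImg_mono (m : ℕ) :
    (A.S m (Tg p m) m).image Fin.val ⊆ (A.S (m+1) (Tg p (m+1)) (m+1)).image Fin.val := by
  rw [SImg_horizon A p m le_rfl (Nat.le_succ m)]
  exact Finset.image_subset_image (A.irrevocableS (m+1) _ m (Nat.lt_succ_self m))

lemma RImg_mono (m : ℕ) :
    (A.R m (Tg p m) m).image Fin.val ⊆ (A.R (m+1) (Tg p (m+1)) (m+1)).image Fin.val := by
  rw [RImg_horizon A p m le_rfl (Nat.le_succ m)]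
  exact Finset.image_subset_image (A.irrevocableR (m+1) _ m (Nat.lt_succ_self m))

lemma SImg_chain {a b : ℕ} (h : a ≤ b) :
    (A.S a (Tg p a) a).image Fin.val ⊆ (A.S b (Tg p b) b).image Fin.val := by
  induction b, h using Nat.le_induction with
  | base => exact subset_rfl
  | succ b hb ih => exact ih.trans (SImg_mono A p b)

lemma RImg_chain {a b : ℕ} (h : a ≤ b) :
    (A.R a (Tg p a) a).image Fin.val ⊆ (A.R b (Tg p b) b).image Fin.val := by
  induction b, h using Nat.le_induction with
  | base => exact subset_rfl
  | succ b hb ih => exact ih.trans (RImg_mono A p b)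

lemma covOf_mono (m : ℕ) : covOf A p m ⊆ covOf A p (m+1) :=
  union_subset_union (SImg_mono A p m) (RImg_mono A p m)

lemma SImg_subset_range (m : ℕ) :
    (A.S m (Tg p m) m).image Fin.val ⊆ Finset.range m := by
  intro v hv
  simp only [mem_image] at hv
  obtain ⟨x, hx, rfl⟩ := hv
  exact mem_range.mpr (A.memS_lt m _ m x hx)

lemma RImg_subset_range (m : ℕ) :
    (A.R m (Tg p m) m).image Fin.val ⊆ Finset.range m := by
  intro v hv
  simp only [mem_image] at hv
  obtain ⟨x, hx, rfl⟩ := hv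
  exact mem_range.mpr (A.memR_lt m _ m x hx)

end Transport

/-- key invariant: after stage `n`, every presented vertex other than the pending one
is in `S ∪ R`. -/
lemma uncovered_eq_pend (A : DelayedVCAlgorithmRes) :
    ∀ n, ∀ v ≤ n, v ∉ covOf A (par A) (n + 1) → v = pend A n := by
  intro n
  induction n with
  | zero =>
    intro v hv _
    have := pend_zero A
    omega
  | succ n ih =>
    intro v hv hvcov
    have hmono : covOf A (par A) (n+1) ⊆ covOf A (par A) (n+2) := covOf_mono A (par A) (n+1)
    have hsmall : v ≤ n → v = pend A (n+1) := by
      intro hvn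
      by_cases hvp : v = pend A n
      · -- v is the old pending vertex; it cannot have been covered at stage n+1
        have hp : pend A n ∉ covOf A (par A) (n + 2) := by
          rw [← hvp]; exact hvcov
        rw [pend_succ, if_neg hp, ← hvp]
      · exfalso
        apply hvcov
        apply hmono
        by_contra hc
        exact hvp (ih v hvn hc)
    rcases Nat.lt_or_ge v (n+1) with h | h
    · exact hsmall (by omega)
    · -- v = n+1, the new vertex
      have hv1 : v = n + 1 := by omega
      by_cases hp : pend A n ∈ covOf A (par A) (n + 2)
      · rw [pend_succ, if_pos hp]; exact hv1
      · -- neither the old pending vertex nor the new one covered: contradicts validity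
        exfalso
        set G := Tg (par A) (n+2) with hG
        have hple : pend A n ≤ n := pend_le A n
        have hx : (⟨pend A n, by omega⟩ : Fin (n+2)) ∉
            A.S (n+2) G (n+2) ∪ A.R (n+2) G (n+2) := by
          intro hmem
          apply hp
          rcases mem_union.mp hmem with hm | hm
          · exact mem_union_left _ (mem_image_of_mem _ hm)
          · exact mem_union_right _ (mem_image_of_mem _ hm)
        have hy : (⟨n+1, by omega⟩ : Fin (n+2)) ∉
            A.S (n+2) G (n+2) ∪ A.R (n+2) G (n+2) := by
          intro hmem
          apply hvcov
          rw [hv1]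
          rcases mem_union.mp hmem with hm | hm
          · exact mem_union_left _ (mem_image_of_mem _ hm)
          · exact mem_union_right _ (mem_image_of_mem _ hm)
        refine A.valid (n+2) G (n+2) le_rfl _ _ (by simp; omega) (by simp) hx hy ?_
        rw [Tg_adj]
        refine ⟨by simp; omega, ?_⟩
        have hmax : max ((⟨pend A n, by omega⟩ : Fin (n+2)) : ℕ)
            ((⟨n+1, by omega⟩ : Fin (n+2)) : ℕ) = n + 1 := by simp; omega
        have hmin : min ((⟨pend A n, by omega⟩ : Fin (n+2)) : ℕ)
            ((⟨n+1, by omega⟩ : Fin (n+2)) : ℕ) = pend A n := by simp; omega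
        rw [hmax, hmin]
        show par A (n+1) = pend A n
        unfold par
        norm_num


section Snapshot

variable (A : DelayedVCAlgorithmRes) (M : ℕ)

/-- snapshot: selected vertices (as naturals) after the forcing phase. -/
noncomputable def SN : Finset ℕ := (A.S (M+1) (Tg (par A) (M+1)) (M+1)).image Fin.val

/-- snapshot: reserved vertices after the forcing phase. -/
noncomputable def RN : Finset ℕ := (A.R (M+1) (Tg (par A) (M+1)) (M+1)).image Fin.val

/-- reserved-but-not-selected vertices at the snapshot. -/
noncomputable def RN' : Finset ℕ := RN A M \ SN A M

/-- the two parity classes (by tree depth) among the presented vertices. -/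
noncomputable def Om (b : ℕ) : Finset ℕ :=
  (Finset.range (M+1)).filter (fun v => depthR A v % 2 = b)

/-- parity classes of the reserved-not-selected vertices. -/
noncomputable def Wp (b : ℕ) : Finset ℕ :=
  (RN' A M).filter (fun v => depthR A v % 2 = b)

/-- the parity chosen by the adversary. -/
noncomputable def pstar : ℕ :=
  if (Wp A M 0).card + 2*(Om A M 1).card ≥ (Wp A M 1).card + 2*(Om A M 0).card then 0 else 1

/-- the set of vertices that get starred (receive an extra pendant leaf). -/
noncomputable def Wst : Finset ℕ := Wp A M (pstar A M)

noncomputable def Wsort : List ℕ := (Wst A M).sort (· ≤ ·)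

noncomputable def hostOf (i : ℕ) : ℕ := (Wsort A M).getD i 0

/-- the full parent function, with pendant leaves at the starred vertices appended. -/
noncomputable def parF (j : ℕ) : ℕ :=
  if j ≤ M then par A j else hostOf A M (j - (M+1))

/-- total number of vertices of the final instance. -/
noncomputable def nstar : ℕ := M + 1 + (Wst A M).card

/-- the final hard instance. -/
noncomputable def Gf : SimpleGraph (Fin (nstar A M)) := Tg (parF A M) (nstar A M)

lemma TgF_eq {m : ℕ} (hm : m ≤ M + 1) : Tg (parF A M) m = Tg (par A) m := by
  apply Tg_congr
  intro j hj
  unfold parF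
  rw [if_pos (by omega)]

lemma RN'_subset_range : RN' A M ⊆ Finset.range (M+1) :=
  (sdiff_subset).trans (RImg_subset_range A (par A) (M+1))

lemma SN_subset_range : SN A M ⊆ Finset.range (M+1) :=
  SImg_subset_range A (par A) (M+1)

lemma Om_card_sum : (Om A M 0).card + (Om A M 1).card = M + 1 := by
  have h : Om A M 1 = (Finset.range (M+1)).filter (fun v => ¬ (depthR A v % 2 = 0)) := by
    apply filter_congr
    intro x _
    omega
  rw [h]
  simp only [Om]
  rw [card_filter_add_card_filter_not, card_range]

lemma Wp_card_sum : (Wp A M 0).card + (Wp A M 1).card = (RN' A M).card := by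
  have h : Wp A M 1 = (RN' A M).filter (fun v => ¬ (depthR A v % 2 = 0)) := by
    apply filter_congr
    intro x _
    omega
  rw [h]
  simp only [Wp]
  rw [card_filter_add_card_filter_not]

lemma pstar_ineq :
    ((Wst A M).card : ℝ) - 2 * ((Om A M (pstar A M)).card : ℝ) ≥
      (((RN' A M).card : ℝ) - 2 * ((M : ℝ) + 1)) / 2 := by
  have h1 := Om_card_sum A M
  have h2 := Wp_card_sum A M
  unfold Wst pstar
  split
  case isTrue h =>
    have h1' : ((Om A M 0).card : ℝ) + ((Om A M 1).card : ℝ) = (M : ℝ) + 1 := by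
      exact_mod_cast h1
    have h2' : ((Wp A M 0).card : ℝ) + ((Wp A M 1).card : ℝ) = ((RN' A M).card : ℝ) := by
      exact_mod_cast h2
    have h' : ((Wp A M 0).card : ℝ) + 2*((Om A M 1).card : ℝ) ≥
        ((Wp A M 1).card : ℝ) + 2*((Om A M 0).card : ℝ) := by exact_mod_cast h
    linarith
  case isFalse h =>
    have h1' : ((Om A M 0).card : ℝ) + ((Om A M 1).card : ℝ) = (M : ℝ) + 1 := by
      exact_mod_cast h1
    have h2' : ((Wp A M 0).card : ℝ) + ((Wp A M 1).card : ℝ) = ((RN' A M).card : ℝ) := by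
      exact_mod_cast h2
    have h' : ((Wp A M 0).card : ℝ) + 2*((Om A M 1).card : ℝ) <
        ((Wp A M 1).card : ℝ) + 2*((Om A M 0).card : ℝ) := by
      have := lt_of_not_ge h
      exact_mod_cast this
    linarith

lemma Wst_subset_Om : Wst A M ⊆ Om A M (pstar A M) := by
  intro w hw
  have h1 : w ∈ RN' A M := mem_of_mem_filter _ hw
  have h2 : depthR A w % 2 = pstar A M := (mem_filter.mp hw).2
  exact mem_filter.mpr ⟨RN'_subset_range A M h1, h2⟩

lemma Wst_subset_RN' : Wst A M ⊆ RN' A M := filter_subset _ _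

lemma hostOf_mem {i : ℕ} (hi : i < (Wst A M).card) : hostOf A M i ∈ Wst A M := by
  have hlen : i < (Wsort A M).length := by
    unfold Wsort; rw [Finset.length_sort]; exact hi
  unfold hostOf
  rw [List.getD_eq_getElem _ _ hlen]
  have := List.getElem_mem hlen
  unfold Wsort at this
  rwa [Finset.mem_sort] at this

lemma cov_lower : M ≤ (SN A M).card + (RN' A M).card := by
  have hsub : Finset.range (M+1) \ {pend A M} ⊆ SN A M ∪ RN A M := by
    intro v hv
    rw [mem_sdiff, mem_range, mem_singleton] at hv
    by_contra hc
    exact hv.2 (uncovered_eq_pend A M v (by omega) hc)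
  have h1 : (Finset.range (M+1) \ {pend A M}).card ≥ M := by
    have := le_card_sdiff ({pend A M}) (Finset.range (M+1))
    simp only [card_singleton, card_range] at this
    omega
  have h2 : (SN A M ∪ RN A M).card = (SN A M).card + (RN' A M).card := by
    rw [← Finset.union_sdiff_self_eq_union]
    exact card_union_of_disjoint (Finset.disjoint_sdiff)
  have := card_le_card hsub
  omega

end Snapshot



section FinalGraph

variable (A : DelayedVCAlgorithmRes) (M : ℕ)

/-- final selected set (as naturals). -/
noncomputable def SFv : Finset ℕ := (A.S (nstar A M) (Gf A M) (nstar A M)).image Fin.val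

/-- final reserved set (as naturals). -/
noncomputable def RFv : Finset ℕ := (A.R (nstar A M) (Gf A M) (nstar A M)).image Fin.val

/-- the leaf vertices. -/
noncomputable def Lv : Finset ℕ := Finset.Ico (M+1) (nstar A M)

lemma M1_le_nstar : M + 1 ≤ nstar A M := Nat.le_add_right _ _

lemma Gf_eq : Gf A M = Tg (parF A M) (nstar A M) := rfl

lemma SN_subset_SFv : SN A M ⊆ SFv A M := by
  have h1 : SN A M = (A.S (M+1) (Tg (parF A M) (M+1)) (M+1)).image Fin.val := by
    rw [SN, TgF_eq A M le_rfl]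
  rw [h1, SFv, Gf_eq]
  exact SImg_chain A (parF A M) (M1_le_nstar A M)

lemma RN_subset_RFv : RN A M ⊆ RFv A M := by
  have h1 : RN A M = (A.R (M+1) (Tg (parF A M) (M+1)) (M+1)).image Fin.val := by
    rw [RN, TgF_eq A M le_rfl]
  rw [h1, RFv, Gf_eq]
  exact RImg_chain A (parF A M) (M1_le_nstar A M)

lemma Wst_lt_M1 : ∀ w ∈ Wst A M, w < M + 1 := by
  intro w hw
  have := RN'_subset_range A M (Wst_subset_RN' A M hw)
  exact mem_range.mp this

lemma adj_host_leaf {i : ℕ} (hi : i < (Wst A M).card)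
    (h1 : hostOf A M i < nstar A M) (h2 : M + 1 + i < nstar A M) :
    (Gf A M).Adj ⟨hostOf A M i, h1⟩ ⟨M + 1 + i, h2⟩ := by
  have hhost : hostOf A M i < M + 1 := Wst_lt_M1 A M _ (hostOf_mem A M hi)
  rw [Gf_eq, Tg_adj]
  constructor
  · simp only []
    omega
  · have hmax : max ((⟨hostOf A M i, h1⟩ : Fin (nstar A M)) : ℕ)
        ((⟨M + 1 + i, h2⟩ : Fin (nstar A M)) : ℕ) = M + 1 + i := by simp only []; omega
    have hmin : min ((⟨hostOf A M i, h1⟩ : Fin (nstar A M)) : ℕ)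
        ((⟨M + 1 + i, h2⟩ : Fin (nstar A M)) : ℕ) = hostOf A M i := by simp only []; omega
    rw [hmax, hmin]
    unfold parF
    rw [if_neg (by omega)]
    congr 1
    omega

lemma om_lt : ∀ m ∈ Om A M (pstar A M), m < nstar A M := by
  intro m hm
  have : m ∈ Finset.range (M+1) := mem_of_mem_filter _ hm
  have := mem_range.mp this
  have := M1_le_nstar A M
  omega

noncomputable def OmFin : Finset (Fin (nstar A M)) :=
  (Om A M (pstar A M)).attachFin (om_lt A M)

lemma pstar01 : pstar A M = 0 ∨ pstar A M = 1 := by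
  unfold pstar; split <;> simp

lemma isVC_OmFin : IsVC (Gf A M) (OmFin A M) := by
  intro x y hadj
  rw [Gf_eq, Tg_adj] at hadj
  obtain ⟨hne, hpar⟩ := hadj
  set a := max (x : ℕ) (y : ℕ) with ha
  set b := min (x : ℕ) (y : ℕ) with hb
  have hxy : ((x : ℕ) = a ∧ (y : ℕ) = b) ∨ ((y : ℕ) = a ∧ (x : ℕ) = b) := by omega
  have hba : b < a := by omega
  have hans : a ∈ Om A M (pstar A M) ∨ b ∈ Om A M (pstar A M) := by
    by_cases hM' : a ≤ M
    · -- tree edge: parities of depths differ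
      have hb' : b = par A a := by
        rw [← hpar]
        unfold parF
        rw [if_pos hM']
      have hd : depthR A a = depthR A b + 1 := by
        rw [hb']
        exact depthR_succ_parent A a (by omega)
      have h01 := pstar01 A M
      by_cases hp : depthR A a % 2 = pstar A M
      · left
        exact mem_filter.mpr ⟨mem_range.mpr (by omega), hp⟩
      · right
        refine mem_filter.mpr ⟨mem_range.mpr (by omega), ?_⟩
        omega
    · -- leaf edge: the host is starred, hence in `Om`
      right
      have hi : a - (M+1) < (Wst A M).card := by
        have : a < nstar A M := by
          rcases hxy with ⟨h1, _⟩ | ⟨h1, _⟩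
          · rw [← h1]; exact x.isLt
          · rw [← h1]; exact y.isLt
        unfold nstar at this
        omega
      have hb' : b = hostOf A M (a - (M+1)) := by
        rw [← hpar]
        unfold parF
        rw [if_neg hM']
      rw [hb']
      exact Wst_subset_Om A M (hostOf_mem A M hi)
  -- translate to Fin membership
  rcases hans with h | h
  · rcases hxy with ⟨h1, _⟩ | ⟨h1, _⟩
    · left
      rw [OmFin, Finset.mem_attachFin, h1]
      exact h
    · right
      rw [OmFin, Finset.mem_attachFin, h1]
      exact h
  · rcases hxy with ⟨_, h2⟩ | ⟨_, h2⟩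
    · right
      rw [OmFin, Finset.mem_attachFin, h2]
      exact h
    · left
      rw [OmFin, Finset.mem_attachFin, h2]
      exact h

lemma vcNum_le_Om : vcNum (Gf A M) ≤ (Om A M (pstar A M)).card := by
  have : (Om A M (pstar A M)).card ∈
      {k : ℕ | ∃ S : Finset (Fin (nstar A M)), IsVC (Gf A M) S ∧ S.card = k} :=
    ⟨OmFin A M, isVC_OmFin A M, Finset.card_attachFin _ _⟩
  exact Nat.sInf_le this

lemma adj_01 (hM : 1 ≤ M) :
    (Gf A M).Adj ⟨0, by have := M1_le_nstar A M; omega⟩ ⟨1, by have := M1_le_nstar A M; omega⟩ := by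
  rw [Gf_eq, Tg_adj]
  refine ⟨by simp, ?_⟩
  have hmax : max ((⟨0, by have := M1_le_nstar A M; omega⟩ : Fin (nstar A M)) : ℕ)
      ((⟨1, by have := M1_le_nstar A M; omega⟩ : Fin (nstar A M)) : ℕ) = 1 := by simp
  have hmin : min ((⟨0, by have := M1_le_nstar A M; omega⟩ : Fin (nstar A M)) : ℕ)
      ((⟨1, by have := M1_le_nstar A M; omega⟩ : Fin (nstar A M)) : ℕ) = 0 := by simp
  rw [hmax, hmin]
  unfold parF
  rw [if_pos hM]
  show pend A 0 = 0
  exact pend_zero A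

lemma one_le_vcNum (hM : 1 ≤ M) : 1 ≤ vcNum (Gf A M) := by
  have hne : {k : ℕ | ∃ S : Finset (Fin (nstar A M)), IsVC (Gf A M) S ∧ S.card = k}.Nonempty :=
    ⟨(Finset.univ : Finset (Fin (nstar A M))).card,
      Finset.univ, fun x y _ => Or.inl (mem_univ x), rfl⟩
  obtain ⟨C, hC, hcard⟩ := Nat.sInf_mem hne
  rw [vcNum, ← hcard]
  rcases hC (adj_01 A M hM) with h | h
  · exact card_pos.mpr ⟨_, h⟩
  · exact card_pos.mpr ⟨_, h⟩

end FinalGraph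



section Counting

variable (A : DelayedVCAlgorithmRes) (M : ℕ)

noncomputable def idxW (w : ℕ) : ℕ := (Wsort A M).idxOf w

lemma idxW_lt {w : ℕ} (hw : w ∈ Wst A M) : idxW A M w < (Wst A M).card := by
  have : w ∈ Wsort A M := by
    unfold Wsort
    exact (Finset.mem_sort _).mpr hw
  have h := List.idxOf_lt_length_iff.mpr this
  unfold Wsort at h
  rw [Finset.length_sort] at h
  exact h

lemma hostOf_idxW {w : ℕ} (hw : w ∈ Wst A M) : hostOf A M (idxW A M w) = w := by
  have hmem : w ∈ Wsort A M := by
    unfold Wsort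
    exact (Finset.mem_sort _).mpr hw
  have hlen : idxW A M w < (Wsort A M).length := List.idxOf_lt_length_iff.mpr hmem
  unfold hostOf
  rw [List.getD_eq_getElem _ _ hlen]
  exact List.getElem_idxOf hlen

noncomputable def leafN (w : ℕ) : ℕ := M + 1 + idxW A M w

lemma leafN_lt {w : ℕ} (hw : w ∈ Wst A M) : leafN A M w < nstar A M := by
  have := idxW_lt A M hw
  unfold leafN nstar
  omega

lemma leafN_inj {w1 w2 : ℕ} (h1 : w1 ∈ Wst A M) (h2 : w2 ∈ Wst A M)
    (h : leafN A M w1 = leafN A M w2) : w1 = w2 := by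
  have : idxW A M w1 = idxW A M w2 := by unfold leafN at h; omega
  rw [← hostOf_idxW A M h1, ← hostOf_idxW A M h2, this]

lemma key_edge {w : ℕ} (hw : w ∈ Wst A M) {T : Finset (Fin (nstar A M))}
    (hT : IsVC (Gf A M) (A.S (nstar A M) (Gf A M) (nstar A M) ∪ T)) :
    w ∈ SFv A M ∪ T.image Fin.val ∨ leafN A M w ∈ SFv A M ∪ T.image Fin.val := by
  have hwlt : w < nstar A M := by
    have := Wst_lt_M1 A M w hw
    have := M1_le_nstar A M
    omega
  have hllt : leafN A M w < nstar A M := leafN_lt A M hw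
  have hadj : (Gf A M).Adj ⟨w, hwlt⟩ ⟨leafN A M w, hllt⟩ := by
    have h1 : hostOf A M (idxW A M w) < nstar A M := by
      rw [hostOf_idxW A M hw]; exact hwlt
    have h2 : M + 1 + idxW A M w < nstar A M := leafN_lt A M hw
    have h := adj_host_leaf A M (idxW_lt A M hw) h1 h2
    have e1 : (⟨hostOf A M (idxW A M w), h1⟩ : Fin (nstar A M)) = ⟨w, hwlt⟩ :=
      Fin.ext (hostOf_idxW A M hw)
    have e2 : (⟨M + 1 + idxW A M w, h2⟩ : Fin (nstar A M)) = ⟨leafN A M w, hllt⟩ :=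
      Fin.ext rfl
    rwa [e1, e2] at h
  have himg : ∀ z : Fin (nstar A M), z ∈ A.S (nstar A M) (Gf A M) (nstar A M) ∪ T →
      (z : ℕ) ∈ SFv A M ∪ T.image Fin.val := by
    intro z hz
    rcases mem_union.mp hz with h | h
    · exact mem_union_left _ (mem_image_of_mem _ h)
    · exact mem_union_right _ (mem_image_of_mem _ h)
  rcases hT hadj with h | h
  · exact Or.inl (himg _ h)
  · exact Or.inr (himg _ h)

lemma comp_nonempty :
    {k : ℕ | ∃ T : Finset (Fin (nstar A M)),
      IsVC (Gf A M) (A.S (nstar A M) (Gf A M) (nstar A M) ∪ T) ∧ T.card = k}.Nonempty := by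
  refine ⟨(Finset.univ : Finset (Fin (nstar A M))).card, Finset.univ, ?_, rfl⟩
  intro x y _
  exact Or.inl (mem_union_right _ (mem_univ x))

lemma comp_lower :
    ((Wst A M) \ SFv A M).card ≤
      (sInf {k : ℕ | ∃ T : Finset (Fin (nstar A M)),
        IsVC (Gf A M) (A.S (nstar A M) (Gf A M) (nstar A M) ∪ T) ∧ T.card = k})
      + ((SFv A M) ∩ Lv A M).card := by
  obtain ⟨T, hT, hTcard⟩ := Nat.sInf_mem (comp_nonempty A M)
  set Tv := T.image Fin.val with hTv
  have hTvcard : Tv.card = T.card := card_image_of_injective _ Fin.val_injective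
  set W2 := ((Wst A M) \ SFv A M).filter (fun w => leafN A M w ∉ SFv A M) with hW2
  set W3 := ((Wst A M) \ SFv A M).filter (fun w => ¬ (leafN A M w ∉ SFv A M)) with hW3
  have hsplit : W2.card + W3.card = ((Wst A M) \ SFv A M).card :=
    card_filter_add_card_filter_not _
  -- W2 injects into Tv
  have hc2 : W2.card ≤ Tv.card := by
    apply card_le_card_of_injOn (fun w => if w ∈ Tv then w else leafN A M w)
    · intro w hwmem; beta_reduce
      rw [Finset.mem_coe, hW2, mem_filter, mem_sdiff] at hwmem
      obtain ⟨⟨hwW, hwS⟩, hwl⟩ := hwmem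
      rcases key_edge A M hwW hT with h | h
      · rcases mem_union.mp h with h' | h'
        · exact absurd h' hwS
        · rw [if_pos h']; exact h'
      · rcases mem_union.mp h with h' | h'
        · exact absurd h' hwl
        · by_cases hwt : w ∈ Tv
          · rw [if_pos hwt]; exact hwt
          · rw [if_neg hwt]; exact h'
    · intro w1 hw1 w2 hw2 heq
      rw [Finset.mem_coe, hW2, mem_filter] at hw1 hw2
      have hw1W : w1 ∈ Wst A M := (mem_sdiff.mp hw1.1).1
      have hw2W : w2 ∈ Wst A M := (mem_sdiff.mp hw2.1).1
      have hb1 := Wst_lt_M1 A M w1 hw1W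
      have hb2 := Wst_lt_M1 A M w2 hw2W
      have hl1 : M + 1 ≤ leafN A M w1 := by unfold leafN; omega
      have hl2 : M + 1 ≤ leafN A M w2 := by unfold leafN; omega
      by_cases h1 : w1 ∈ Tv <;> by_cases h2 : w2 ∈ Tv <;>
        simp only [if_pos, if_neg, h1, h2, if_true, if_false] at heq
      · exact heq
      · omega
      · omega
      · exact leafN_inj A M hw1W hw2W heq
  -- W3 injects into SFv ∩ Lv
  have hc3 : W3.card ≤ ((SFv A M) ∩ Lv A M).card := by
    apply card_le_card_of_injOn (fun w => leafN A M w)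
    · intro w hwmem; beta_reduce
      rw [Finset.mem_coe, hW3, mem_filter, mem_sdiff] at hwmem
      obtain ⟨⟨hwW, _⟩, hwl⟩ := hwmem
      push_neg at hwl
      refine mem_inter.mpr ⟨hwl, ?_⟩
      rw [Lv, Finset.mem_Ico]
      have := leafN_lt A M hwW
      unfold leafN at *
      omega
    · intro w1 hw1 w2 hw2 heq
      rw [Finset.mem_coe, hW3, mem_filter] at hw1 hw2
      exact leafN_inj A M (mem_sdiff.mp hw1.1).1 (mem_sdiff.mp hw2.1).1 heq
  omega

lemma sF_lower :
    (SN A M).card + ((Wst A M) ∩ SFv A M).card + ((SFv A M) ∩ Lv A M).card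
      ≤ (SFv A M).card := by
  have hd1 : Disjoint (SN A M) ((Wst A M) ∩ SFv A M) := by
    rw [Finset.disjoint_left]
    intro v hv hv'
    have : v ∈ RN' A M := Wst_subset_RN' A M (mem_inter.mp hv').1
    rw [RN', mem_sdiff] at this
    exact this.2 hv
  have hd2 : Disjoint (SN A M ∪ ((Wst A M) ∩ SFv A M)) ((SFv A M) ∩ Lv A M) := by
    rw [Finset.disjoint_left]
    intro v hv hv'
    have hvlv : v ∈ Lv A M := (mem_inter.mp hv').2
    rw [Lv, Finset.mem_Ico] at hvlv
    rcases mem_union.mp hv with h | h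
    · have := mem_range.mp (SN_subset_range A M h)
      omega
    · have := Wst_lt_M1 A M v (mem_inter.mp h).1
      omega
  have hsub : SN A M ∪ ((Wst A M) ∩ SFv A M) ∪ ((SFv A M) ∩ Lv A M) ⊆ SFv A M := by
    intro v hv
    rcases mem_union.mp hv with h | h
    · rcases mem_union.mp h with h' | h'
      · exact SN_subset_SFv A M h'
      · exact (mem_inter.mp h').2
    · exact (mem_inter.mp h).1
  have := card_le_card hsub
  rw [card_union_of_disjoint hd2, card_union_of_disjoint hd1] at this
  omega

lemma rF_lower : (RN' A M).card ≤ (RFv A M).card :=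
  card_le_card ((sdiff_subset).trans (RN_subset_RFv A M))

lemma sum_lower : M ≤ (SFv A M).card + (RFv A M).card := by
  have h1 : SN A M ∪ RN A M ⊆ SFv A M ∪ RFv A M :=
    union_subset_union (SN_subset_SFv A M) (RN_subset_RFv A M)
  have h2 : (SN A M ∪ RN A M).card = (SN A M).card + (RN' A M).card := by
    rw [← Finset.union_sdiff_self_eq_union]
    exact card_union_of_disjoint (Finset.disjoint_sdiff)
  have h3 := cov_lower A M
  have h4 := card_le_card h1
  have h5 := card_union_le (SFv A M) (RFv A M)
  omega

lemma wst_split : ((Wst A M) ∩ SFv A M).card + ((Wst A M) \ SFv A M).card = (Wst A M).card :=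
  Finset.card_inter_add_card_sdiff _ _

end Counting



section Cost

variable (A : DelayedVCAlgorithmRes) (M : ℕ)

lemma SFv_card : (SFv A M).card = (A.S (nstar A M) (Gf A M) (nstar A M)).card :=
  card_image_of_injective _ Fin.val_injective

lemma RFv_card : (RFv A M).card = (A.R (nstar A M) (Gf A M) (nstar A M)).card :=
  card_image_of_injective _ Fin.val_injective

lemma cost_main {α : ℝ} (hα : 1 / 2 < α) :
    resCost A α (nstar A M) (Gf A M) ≥ 2 * ((Om A M (pstar A M)).card : ℝ) - 1 := by
  unfold resCost
  have h1 := sF_lower A M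
  have h2 := comp_lower A M
  have h3 := rF_lower A M
  have h4 := wst_split A M
  have h5 := cov_lower A M
  have h6 := pstar_ineq A M
  rw [← SFv_card, ← RFv_card]
  have h1' := (Nat.cast_le (α := ℝ)).mpr h1
  push_cast at h1'
  have h2' := (Nat.cast_le (α := ℝ)).mpr h2
  push_cast at h2'
  have h3' := (Nat.cast_le (α := ℝ)).mpr h3
  push_cast at h3'
  have h4' : (((Wst A M) ∩ SFv A M).card : ℝ) + (((Wst A M) \ SFv A M).card : ℝ)
      = ((Wst A M).card : ℝ) := by exact_mod_cast h4
  have h5' := (Nat.cast_le (α := ℝ)).mpr h5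
  push_cast at h5'
  have hr0 : (0:ℝ) ≤ ((RN' A M).card : ℝ) := by positivity
  have hm1 : α * ((RN' A M).card : ℝ) ≤ α * ((RFv A M).card : ℝ) :=
    mul_le_mul_of_nonneg_left h3' (by linarith)
  have hm2 : (1/2) * ((RN' A M).card : ℝ) ≤ α * ((RN' A M).card : ℝ) :=
    mul_le_mul_of_nonneg_right (le_of_lt hα) hr0
  linarith

lemma cost_min {α : ℝ} (hα : 1 / 2 < α) :
    resCost A α (nstar A M) (Gf A M) ≥ (min α 1) * M := by
  unfold resCost
  have hsum := sum_lower A M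
  rw [← SFv_card, ← RFv_card]
  have hsum' := (Nat.cast_le (α := ℝ)).mpr hsum
  push_cast at hsum'
  have hs0 : (0:ℝ) ≤ ((SFv A M).card : ℝ) := by positivity
  have hr0 : (0:ℝ) ≤ ((RFv A M).card : ℝ) := by positivity
  have hc0 : (0:ℝ) ≤ ((sInf {k : ℕ | ∃ T : Finset (Fin (nstar A M)),
      IsVC (Gf A M) (A.S (nstar A M) (Gf A M) (nstar A M) ∪ T) ∧ T.card = k} : ℕ) : ℝ) := by
    positivity
  have hm : (0:ℝ) ≤ min α 1 := le_min (by linarith) (by norm_num)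
  have hm1 : min α 1 * ((SFv A M).card : ℝ) ≤ 1 * ((SFv A M).card : ℝ) :=
    mul_le_mul_of_nonneg_right (min_le_right _ _) hs0
  have hm2 : min α 1 * ((RFv A M).card : ℝ) ≤ α * ((RFv A M).card : ℝ) :=
    mul_le_mul_of_nonneg_right (min_le_left _ _) hr0
  have := mul_le_mul_of_nonneg_left hsum' hm
  linarith

end Cost


end VCLB

/-- For `α > 1/2`, no deterministic delayed-decision algorithm with reservations for
online Vertex Cover is better than 2-competitive. -/
theorem vc_reservation_lower_bound_large_alpha (α ε : ℝ) (hα : 1 / 2 < α)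
    (hε : 0 < ε) (A : DelayedVCAlgorithmRes) :
    ∃ (n : ℕ) (G : SimpleGraph (Fin n)),
      1 ≤ vcNum G ∧ resCost A α n G > (2 - ε) * (vcNum G : ℝ) := by
  classical
  set m : ℝ := min α 1 with hm
  have hm0 : 0 < m := lt_min (by linarith) (by norm_num)
  set M : ℕ := ⌈(4 / ε + 2) / m⌉₊ + 1 with hM
  have hM1 : 1 ≤ M := by omega
  have hMm : m * (M : ℝ) ≥ 4 / ε + 2 := by
    have h1 : ((4 / ε + 2) / m) ≤ (⌈(4 / ε + 2) / m⌉₊ : ℝ) := Nat.le_ceil _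
    have h2 : (M : ℝ) ≥ (4 / ε + 2) / m := by
      rw [hM]
      push_cast
      linarith
    calc m * (M : ℝ) ≥ m * ((4 / ε + 2) / m) := mul_le_mul_of_nonneg_left h2 (le_of_lt hm0)
      _ = 4 / ε + 2 := by field_simp
  refine ⟨VCLB.nstar A M, VCLB.Gf A M, VCLB.one_le_vcNum A M hM1, ?_⟩
  set τ : ℕ := vcNum (VCLB.Gf A M) with hτ
  have hτ1 : 1 ≤ τ := VCLB.one_le_vcNum A M hM1
  have hcost1 := VCLB.cost_main A M hα
  have hcost2 := VCLB.cost_min A M hα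
  have hom : (τ : ℝ) ≤ ((VCLB.Om A M (VCLB.pstar A M)).card : ℝ) := by
    exact_mod_cast VCLB.vcNum_le_Om A M
  rw [← hm] at hcost2
  by_cases hcase : (τ : ℝ) ≤ 2 / ε
  · -- small optimum: the cost alone is large
    have h2τ : (2 - ε) * (τ : ℝ) ≤ 2 * (τ : ℝ) := by
      have : (0:ℝ) ≤ ε * τ := by positivity
      nlinarith
    have h2τ' : 2 * (τ : ℝ) ≤ 4 / ε := by
      have hε' : (0:ℝ) < ε := hε
      calc 2 * (τ : ℝ) ≤ 2 * (2 / ε) := by linarith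
        _ = 4 / ε := by ring
    calc (2 - ε) * (τ : ℝ) ≤ 4 / ε := le_trans h2τ h2τ'
      _ < 4 / ε + 2 := by linarith
      _ ≤ m * M := hMm
      _ ≤ resCost A α (VCLB.nstar A M) (VCLB.Gf A M) := hcost2
  · -- large optimum: cost ≥ 2τ − 1 > (2 − ε)τ
    push_neg at hcase
    have hετ : 2 < ε * (τ : ℝ) := by
      rw [div_lt_iff₀ hε] at hcase
      linarith [mul_comm ε (τ : ℝ)]
    have : resCost A α (VCLB.nstar A M) (VCLB.Gf A M) ≥ 2 * (τ : ℝ) - 1 := by linarith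
    have hgoal : (2 - ε) * (τ : ℝ) < 2 * (τ : ℝ) - 1 := by nlinarith
    linarith
end
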